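/- Let F be a finite free R-module and X : F → F* an R-linear map. For all integers i, j and all a ∈ ⋀^{i+j} F and b ∈ ⋀^j F, one has (⋀^i X*)( ((⋀^j X)(b)) ⌟ a ) = b ⌟ ( (⋀^{i+j} X*)(a) ), where ⌟ denotes contraction. -/

import Mathlib

open ExteriorAlgebra

noncomputable def extMap (R : Type*) [CommRing R] {M N : Type*} [AddCommGroup M] [AddCommGroup N]
    [Module R M] [Module R N] (f : M →ₗ[R] N) :
    ExteriorAlgebra R M →ₐ[R] ExteriorAlgebra R N :=
  ExteriorAlgebra.lift R ⟨(ExteriorAlgebra.ι R).comp f, fun m => by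
    simp [ExteriorAlgebra.ι_sq_zero (f m)]⟩

noncomputable def extContract (R : Type*) [CommRing R] {M : Type*} [AddCommGroup M] [Module R M] :
    ExteriorAlgebra R (Module.Dual R M) →ₐ[R] Module.End R (ExteriorAlgebra R M) :=
  ExteriorAlgebra.lift R ⟨(CliffordAlgebra.contractLeft (Q := (0 : QuadraticForm R M)) :
      Module.Dual R M →ₗ[R] Module.End R (ExteriorAlgebra R M)), fun d => by
    refine LinearMap.ext fun x => ?_
    rw [Module.End.mul_apply, LinearMap.zero_apply]
    exact CliffordAlgebra.contractLeft_contractLeft (Q := (0 : QuadraticForm R M)) (d := d) x⟩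

noncomputable def extContractD (R : Type*) [CommRing R] {M : Type*} [AddCommGroup M] [Module R M] :
    ExteriorAlgebra R M →ₐ[R] Module.End R (ExteriorAlgebra R (Module.Dual R M)) :=
  ExteriorAlgebra.lift R ⟨(CliffordAlgebra.contractLeft
      (Q := (0 : QuadraticForm R (Module.Dual R M))) :
      Module.Dual R (Module.Dual R M) →ₗ[R] _).comp (Module.Dual.eval R M), fun m => by
    refine LinearMap.ext fun x => ?_
    rw [Module.End.mul_apply, LinearMap.zero_apply, LinearMap.comp_apply]
    exact CliffordAlgebra.contractLeft_contractLeft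
      (Q := (0 : QuadraticForm R (Module.Dual R M))) (d := Module.Dual.eval R M m) x⟩

def extDeg (R : Type*) [CommRing R] {M : Type*} [AddCommGroup M] [Module R M] (i : ℕ)
    (x : ExteriorAlgebra R M) : Prop :=
  x ∈ (LinearMap.range (ExteriorAlgebra.ι R : M →ₗ[R] ExteriorAlgebra R M)) ^ i

lemma extMap_ι {R : Type*} [CommRing R] {M N : Type*} [AddCommGroup M] [AddCommGroup N]
    [Module R M] [Module R N] (f : M →ₗ[R] N) (m : M) :
    extMap R f (ExteriorAlgebra.ι R m) = ExteriorAlgebra.ι R (f m) := by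
  simp [extMap]

lemma extContract_ι {R : Type*} [CommRing R] {M : Type*} [AddCommGroup M] [Module R M]
    (d : Module.Dual R M) :
    extContract R (ExteriorAlgebra.ι R d) =
      CliffordAlgebra.contractLeft (Q := (0 : QuadraticForm R M)) d := by
  simp [extContract]

lemma extContractD_ι {R : Type*} [CommRing R] {M : Type*} [AddCommGroup M] [Module R M] (m : M) :
    extContractD R (ExteriorAlgebra.ι R m) =
      CliffordAlgebra.contractLeft (Q := (0 : QuadraticForm R (Module.Dual R M)))
        (Module.Dual.eval R M m) := by
  simp [extContractD]

/-- The key single-generator case: an algebra map along `f` intertwines contraction by `d`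
with contraction by any `d'` pulling back to `d`. -/
lemma extMap_contractLeft {R : Type*} [CommRing R] {M N : Type*} [AddCommGroup M]
    [AddCommGroup N] [Module R M] [Module R N] (f : M →ₗ[R] N)
    (d : Module.Dual R M) (d' : Module.Dual R N) (h : ∀ m, d' (f m) = d m)
    (x : ExteriorAlgebra R M) :
    extMap R f (CliffordAlgebra.contractLeft (Q := (0 : QuadraticForm R M)) d x) =
      CliffordAlgebra.contractLeft (Q := (0 : QuadraticForm R N)) d' (extMap R f x) := by
  induction x using CliffordAlgebra.left_induction with
  | algebraMap r =>
      simp [CliffordAlgebra.contractLeft_algebraMap]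
  | add x y hx hy =>
      simp [map_add, hx, hy]
  | ι_mul x m hx =>
      rw [CliffordAlgebra.contractLeft_ι_mul, map_sub, map_smul, map_mul]
      have hι : extMap R f (CliffordAlgebra.ι (0 : QuadraticForm R M) m) =
          CliffordAlgebra.ι (0 : QuadraticForm R N) (f m) := extMap_ι f m
      rw [hι, hx, map_mul, hι, CliffordAlgebra.contractLeft_ι_mul, h m]

/-- Observation 1.9(a): for `X : F → F*`, `a ∈ ⋀^(i+j) F` and `b ∈ ⋀^j F`,
`(⋀^i X*)( ((⋀^j X)(b)) ⌟ a ) = b ⌟ ( (⋀^(i+j) X*)(a) )`. -/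
theorem exteriorPower_map_contract (R : Type*) [CommRing R]
    (F : Type*) [AddCommGroup F] [Module R F] [Module.Free R F] [Module.Finite R F]
    (X : F →ₗ[R] Module.Dual R F) (i j : ℕ)
    (a b : ExteriorAlgebra R F) (ha : extDeg R (i + j) a) (hb : extDeg R j b) :
    extMap R (X.dualMap ∘ₗ Module.Dual.eval R F) (extContract R (extMap R X b) a) =
      extContractD R b (extMap R (X.dualMap ∘ₗ Module.Dual.eval R F) a) := by
  clear ha hb
  induction b using CliffordAlgebra.induction generalizing a with
  | algebraMap r =>
      rw [AlgHom.commutes, AlgHom.commutes, AlgHom.commutes, Module.algebraMap_end_apply,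
        Module.algebraMap_end_apply, map_smul]
  | ι d =>
      have h1 : extMap R X (CliffordAlgebra.ι (0 : QuadraticForm R F) d) =
          ExteriorAlgebra.ι R (X d) := extMap_ι X d
      rw [h1, extContract_ι]
      have h2 := extContractD_ι (R := R) (M := F) d
      rw [show CliffordAlgebra.ι (0 : QuadraticForm R F) d = ExteriorAlgebra.ι R d from rfl, h2]
      exact extMap_contractLeft _ (X d) (Module.Dual.eval R F d)
        (fun m => by simp) a
  | mul b₁ b₂ h₁ h₂ =>
      rw [map_mul, map_mul, map_mul, Module.End.mul_apply, Module.End.mul_apply, h₁, h₂]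
  | add b₁ b₂ h₁ h₂ =>
      rw [map_add, map_add, map_add, LinearMap.add_apply, LinearMap.add_apply, map_add, h₁, h₂]
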